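/- For the star graph T_{p,q,r}, the quadratic Tits form satisfies B(z) = U(x) + U(y) + U(z) + (1/p + 1/q + 1/r − 1)u₀², where U(x) = Σ_{i=1}^{p−1} ((i+1)/i)(x_i − (i/(i+1))x_{i+1})² (with x_p := u₀), and similarly for U(y), U(z). Consequently B is positive definite iff 1/p + 1/q + 1/r > 1, and positive semidefinite iff 1/p + 1/q + 1/r ≥ 1. -/

import Mathlib

noncomputable section

/-- The contribution `V(x₁,…,x_{p−1},u₀)` of one arm of `T_{p,q,r}` to half the Tits form,
where by convention `x p = u₀` is the coordinate at the branch vertex: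
`V = Σᵢ xᵢ² − Σᵢ xᵢx_{i+1} − x_{p−1}u₀`. -/
def armV (p : ℕ) (x : ℕ → ℝ) : ℝ :=
  (∑ i ∈ Finset.Icc 1 (p - 1), (x i) ^ 2)
    - (∑ i ∈ Finset.Icc 1 (p - 2), x i * x (i + 1))
    - x (p - 1) * x p

/-- `U(x) = Σ_{i=1}^{p−1} ((i+1)/i) (xᵢ − (i/(i+1)) x_{i+1})²` (with `x p = u₀`). -/
def armU (p : ℕ) (x : ℕ → ℝ) : ℝ :=
  ∑ i ∈ Finset.Icc 1 (p - 1),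
    (((i : ℝ) + 1) / i) * (x i - ((i : ℝ) / (i + 1)) * x (i + 1)) ^ 2

/-- The quadratic Tits form `B(z)` of the star graph `T_{p,q,r}`:
`(1/2)B(z) = V(x) + V(y) + V(z) + u₀²`, where `u₀` is the coordinate at the branch vertex
(so that `x p = y q = z r = u₀`). -/
def titsB (p q r : ℕ) (x y z : ℕ → ℝ) : ℝ :=
  2 * (armV p x + armV q y + armV r z + (x p) ^ 2)

lemma armU_key (p : ℕ) (hp : 2 ≤ p) (x : ℕ → ℝ) :
    armU p x = 2 * armV p x + (1 - 1/(p:ℝ)) * (x p)^2 := by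
  induction p, hp using Nat.le_induction with
  | base =>
      simp [armU, armV, Finset.Icc_self]
      norm_num
      ring
  | succ p hp ih =>
      obtain ⟨k, rfl⟩ : ∃ k, p = k + 2 := ⟨p - 2, by omega⟩
      unfold armU armV at ih ⊢
      simp only [show k+2-1 = k+1 from rfl, show k+2-2 = k from rfl,
        show k+2+1-1 = k+2 from rfl, show k+2+1-2 = k+1 from rfl] at ih ⊢
      rw [Finset.sum_Icc_succ_top (show 1 ≤ k+1 by omega),
          Finset.sum_Icc_succ_top (show 1 ≤ k+1+1 by omega),
          Finset.sum_Icc_succ_top (show 1 ≤ k+1+1 by omega)]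
      simp only [show k+1+1 = k+2 from rfl, show k+2+1 = k+3 from rfl]
      push_cast at ih ⊢
      have h2 : ((k:ℝ)+2) ≠ 0 := by positivity
      have h3 : ((k:ℝ)+3) ≠ 0 := by positivity
      have hstep : ((k:ℝ)+2+1)/((k:ℝ)+2) * (x (k+2) - ((k:ℝ)+2)/((k:ℝ)+2+1) * x (k+3))^2
          = 2*(x (k+2))^2 - 2*(x (k+2) * x (k+3))
            + (1 - 1/((k:ℝ)+3)) * (x (k+3))^2 - (1 - 1/((k:ℝ)+2)) * (x (k+2))^2 := by
        field_simp
        ring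
      linear_combination ih + hstep

lemma armU_term_nonneg (x : ℕ → ℝ) (i : ℕ) :
    0 ≤ (((i : ℝ) + 1) / i) * (x i - ((i : ℝ) / (i + 1)) * x (i + 1)) ^ 2 := by
  positivity

lemma armU_nonneg (p : ℕ) (x : ℕ → ℝ) : 0 ≤ armU p x :=
  Finset.sum_nonneg fun i _ => armU_term_nonneg x i

lemma armU_zero (p : ℕ) (x : ℕ → ℝ) (h : armU p x = 0) (hxp : x p = 0) :
    ∀ i ∈ Finset.Icc 1 (p - 1), x i = 0 := by
  have hrel : ∀ i ∈ Finset.Icc 1 (p - 1), x i = ((i:ℝ)/(i+1)) * x (i+1) := by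
    have h0 := (Finset.sum_eq_zero_iff_of_nonneg
      (fun i _ => armU_term_nonneg x i)).mp h
    intro i hi
    have hterm := h0 i hi
    have hi1 : 1 ≤ i := (Finset.mem_Icc.mp hi).1
    have hipos : (0:ℝ) < i := by exact_mod_cast hi1
    have hc : (0:ℝ) < ((i:ℝ)+1)/i := by positivity
    have hsq : (x i - ((i:ℝ)/(i+1)) * x (i+1)) ^ 2 = 0 := by
      rcases mul_eq_zero.mp hterm with h' | h'
      · exact absurd h' (ne_of_gt hc)
      · exact h'
    have := pow_eq_zero_iff (n := 2) (by norm_num) |>.mp hsq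
    linarith
  have H : ∀ j, j ≤ p - 1 → x (p - j) = 0 := by
    intro j
    induction j with
    | zero => intro _; simpa using hxp
    | succ j ihj =>
        intro hj
        have hmem : p - (j+1) ∈ Finset.Icc 1 (p - 1) := by
          rw [Finset.mem_Icc]; omega
        have := hrel _ hmem
        rw [show p - (j+1) + 1 = p - j by omega] at this
        rw [this, ihj (by omega)]
        ring
  intro i hi
  rw [Finset.mem_Icc] at hi
  have := H (p - i) (by omega)
  rwa [show p - (p - i) = i by omega] at this

lemma armU_witness (p : ℕ) (hp : 2 ≤ p) :
    armU p (fun i => (i:ℝ)/p) = 0 := by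
  apply Finset.sum_eq_zero
  intro i hi
  rw [Finset.mem_Icc] at hi
  have hi1 : (0:ℝ) < i := by exact_mod_cast hi.1
  have hp0 : ((p:ℝ)) ≠ 0 := by positivity
  have hi2 : ((i:ℝ)+1) ≠ 0 := by positivity
  simp only []
  push_cast
  rw [show ((i:ℝ)/p - (i : ℝ) / ((i:ℝ) + 1) * (((i:ℝ)+1)/p)) = 0 by field_simp; ring]
  ring

/-- For the star graph `T_{p,q,r}`, the quadratic Tits form satisfies
`B(z) = U(x) + U(y) + U(z) + (1/p + 1/q + 1/r − 1)u₀²`.  Consequently `B` is positive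
definite iff `1/p + 1/q + 1/r > 1`, and positive semidefinite iff `1/p + 1/q + 1/r ≥ 1`. -/
theorem titsForm_Tpqr (p q r : ℕ) (hp : 2 ≤ p) (hq : 2 ≤ q) (hr : 2 ≤ r) :
    (∀ x y z : ℕ → ℝ, x p = y q → y q = z r →
      titsB p q r x y z
        = armU p x + armU q y + armU r z
          + (1 / (p : ℝ) + 1 / (q : ℝ) + 1 / (r : ℝ) - 1) * (x p) ^ 2) ∧
    ((∀ x y z : ℕ → ℝ, x p = y q → y q = z r →
        0 ≤ titsB p q r x y z ∧
        (titsB p q r x y z = 0 →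
          (∀ i ∈ Finset.Icc 1 (p - 1), x i = 0) ∧
          (∀ i ∈ Finset.Icc 1 (q - 1), y i = 0) ∧
          (∀ i ∈ Finset.Icc 1 (r - 1), z i = 0) ∧ x p = 0))
      ↔ 1 < 1 / (p : ℝ) + 1 / (q : ℝ) + 1 / (r : ℝ)) ∧
    ((∀ x y z : ℕ → ℝ, x p = y q → y q = z r → 0 ≤ titsB p q r x y z)
      ↔ 1 ≤ 1 / (p : ℝ) + 1 / (q : ℝ) + 1 / (r : ℝ)) := by
  have hp0 : ((p:ℝ)) ≠ 0 := by positivity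
  have hq0 : ((q:ℝ)) ≠ 0 := by positivity
  have hr0 : ((r:ℝ)) ≠ 0 := by positivity
  -- the identity
  have hident : ∀ x y z : ℕ → ℝ, x p = y q → y q = z r →
      titsB p q r x y z
        = armU p x + armU q y + armU r z
          + (1 / (p : ℝ) + 1 / (q : ℝ) + 1 / (r : ℝ) - 1) * (x p) ^ 2 := by
    intro x y z hxy hyz
    have e1 := armU_key p hp x
    have e2 := armU_key q hq y
    have e3 := armU_key r hr z
    rw [← hxy] at e2
    rw [show z r = x p from (hxy.trans hyz).symm] at e3
    unfold titsB
    linarith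
  -- the witness
  set wx : ℕ → ℝ := fun i => (i:ℝ)/p with hwx
  set wy : ℕ → ℝ := fun i => (i:ℝ)/q with hwy
  set wz : ℕ → ℝ := fun i => (i:ℝ)/r with hwz
  have hwxp : wx p = 1 := by simp [hwx, div_self hp0]
  have hwyq : wy q = 1 := by simp [hwy, div_self hq0]
  have hwzr : wz r = 1 := by simp [hwz, div_self hr0]
  have hw1 : wx p = wy q := by rw [hwxp, hwyq]
  have hw2 : wy q = wz r := by rw [hwyq, hwzr]
  have hwB : titsB p q r wx wy wz
      = 1 / (p : ℝ) + 1 / (q : ℝ) + 1 / (r : ℝ) - 1 := by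
    rw [hident wx wy wz hw1 hw2, armU_witness p hp, armU_witness q hq, armU_witness r hr,
      hwxp]
    ring
  refine ⟨hident, ?_, ?_⟩
  · constructor
    · intro h
      by_contra hs
      push_neg at hs
      obtain ⟨hnn, hz⟩ := h wx wy wz hw1 hw2
      have hB0 : titsB p q r wx wy wz = 0 := le_antisymm (by rw [hwB]; linarith) hnn
      have := (hz hB0).2.2.2
      rw [hwxp] at this
      norm_num at this
    · intro hs x y z hxy hyz
      have hid := hident x y z hxy hyz
      have h1 := armU_nonneg p x
      have h2 := armU_nonneg q y
      have h3 := armU_nonneg r z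
      have h4 : 0 ≤ (1 / (p : ℝ) + 1 / (q : ℝ) + 1 / (r : ℝ) - 1) * (x p) ^ 2 :=
        mul_nonneg (by linarith) (sq_nonneg _)
      refine ⟨by linarith, fun h0 => ?_⟩
      rw [hid] at h0
      have hxp0 : x p = 0 := by
        have : (1 / (p : ℝ) + 1 / (q : ℝ) + 1 / (r : ℝ) - 1) * (x p) ^ 2 = 0 := by linarith
        rcases mul_eq_zero.mp this with h' | h'
        · linarith
        · exact pow_eq_zero_iff (n := 2) (by norm_num) |>.mp h'
      have hU1 : armU p x = 0 := by linarith
      have hU2 : armU q y = 0 := by linarith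
      have hU3 : armU r z = 0 := by linarith
      exact ⟨armU_zero p x hU1 hxp0, armU_zero q y hU2 (by rw [← hxy]; exact hxp0),
        armU_zero r z hU3 (by rw [← hyz, ← hxy]; exact hxp0), hxp0⟩
  · constructor
    · intro h
      by_contra hs
      push_neg at hs
      have := h wx wy wz hw1 hw2
      rw [hwB] at this
      linarith
    · intro hs x y z hxy hyz
      rw [hident x y z hxy hyz]
      have h4 : 0 ≤ (1 / (p : ℝ) + 1 / (q : ℝ) + 1 / (r : ℝ) - 1) * (x p) ^ 2 :=
        mul_nonneg (by linarith) (sq_nonneg _)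
      have h1 := armU_nonneg p x
      have h2 := armU_nonneg q y
      have h3 := armU_nonneg r z
      linarith


end
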